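/- Let $\mu$ and $\nu$ be two probability measures on $\mathbb{R}$ with finite first moments, and suppose $\mu$ admits a density with respect to the Lebesgue measure bounded by $C_\mu$. Then the Kolmogorov-Smirnov distance satisfies $\mathrm{KS}(\mu, \nu) \leq 2\sqrt{C_\mu \mathsf{W}_1(\mu, \nu)}$. -/

import Mathlib

open MeasureTheory Set
open scoped ENNReal

section KSaux

lemma ks_wedgeL (c δ t : ℝ) (hc : 0 < c) (hδ : 0 ≤ δ) :
    ∫ s in Set.Ioc (t - δ/c) t, (δ - c * (t - s)) = δ^2/(2*c) := by
  rw [← intervalIntegral.integral_of_le (by linarith [div_nonneg hδ hc.le])]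
  have : (fun s => δ - c * (t - s)) = fun s => c * s + (δ - c*t) := by funext s; ring
  rw [this, intervalIntegral.integral_add (intervalIntegral.intervalIntegrable_id.const_mul c)
    (intervalIntegrable_const), intervalIntegral.integral_const_mul,
    integral_id, intervalIntegral.integral_const, smul_eq_mul]
  field_simp
  ring

lemma ks_wedgeR (c δ t : ℝ) (hc : 0 < c) (hδ : 0 ≤ δ) :
    ∫ s in Set.Ioc t (t + δ/c), (δ - c * (s - t)) = δ^2/(2*c) := by
  rw [← intervalIntegral.integral_of_le (by linarith [div_nonneg hδ hc.le])]
  have : (fun s => δ - c * (s - t)) = fun s => (-c) * s + (δ + c*t) := by funext s; ring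
  rw [this, intervalIntegral.integral_add (intervalIntegral.intervalIntegrable_id.const_mul (-c))
    (intervalIntegrable_const), intervalIntegral.integral_const_mul,
    integral_id, intervalIntegral.integral_const, smul_eq_mul]
  field_simp
  ring

lemma ks_tail1 (μ : Measure ℝ) [IsProbabilityMeasure μ] :
    ∫⁻ t in Ici (0:ℝ), μ (Ioi t) ∂volume = ∫⁻ a, ENNReal.ofReal a ∂μ := by
  have hmeas : Measurable (Function.uncurry fun (t a : ℝ) =>
      ({p : ℝ × ℝ | p.1 < p.2}).indicator (fun _ => (1:ℝ≥0∞)) (t, a)) := by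
    apply Measurable.indicator measurable_const
    exact measurableSet_lt measurable_fst measurable_snd
  calc ∫⁻ t in Ici (0:ℝ), μ (Ioi t) ∂volume
      = ∫⁻ t in Ici (0:ℝ), ∫⁻ a, ({p : ℝ × ℝ | p.1 < p.2}).indicator (fun _ => (1:ℝ≥0∞)) (t, a) ∂μ ∂volume := by
        apply lintegral_congr; intro t
        have : (fun a => ({p : ℝ × ℝ | p.1 < p.2}).indicator (fun _ => (1:ℝ≥0∞)) (t, a))
            = (Ioi t).indicator (fun _ => (1:ℝ≥0∞)) := by
          funext a; simp [Set.indicator_apply, Set.mem_Ioi]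
        rw [this]; exact (lintegral_indicator_one measurableSet_Ioi).symm
    _ = ∫⁻ a, ∫⁻ t in Ici (0:ℝ), ({p : ℝ × ℝ | p.1 < p.2}).indicator (fun _ => (1:ℝ≥0∞)) (t, a) ∂volume ∂μ :=
        lintegral_lintegral_swap hmeas.aemeasurable
    _ = ∫⁻ a, ENNReal.ofReal a ∂μ := by
        apply lintegral_congr; intro a
        have : (fun t => ({p : ℝ × ℝ | p.1 < p.2}).indicator (fun _ => (1:ℝ≥0∞)) (t, a))
            = (Iio a).indicator (fun _ => (1:ℝ≥0∞)) := by
          funext t; simp [Set.indicator_apply, Set.mem_Iio]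
        rw [this]
        rw [show ((Iio a).indicator fun _ => (1:ℝ≥0∞)) = (Iio a).indicator 1 from rfl]
        rw [lintegral_indicator_one measurableSet_Iio, Measure.restrict_apply measurableSet_Iio]
        have : Iio a ∩ Ici (0:ℝ) = Ico 0 a := by rw [Set.inter_comm]; rfl
        rw [this, Real.volume_Ico, sub_zero]

lemma ks_tail2 (μ : Measure ℝ) [IsProbabilityMeasure μ] :
    ∫⁻ t in Iio (0:ℝ), μ (Iic t) ∂volume = ∫⁻ a, ENNReal.ofReal (-a) ∂μ := by
  have hmeas : Measurable (Function.uncurry fun (t a : ℝ) =>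
      ({p : ℝ × ℝ | p.2 ≤ p.1}).indicator (fun _ => (1:ℝ≥0∞)) (t, a)) := by
    apply Measurable.indicator measurable_const
    exact measurableSet_le measurable_snd measurable_fst
  calc ∫⁻ t in Iio (0:ℝ), μ (Iic t) ∂volume
      = ∫⁻ t in Iio (0:ℝ), ∫⁻ a, ({p : ℝ × ℝ | p.2 ≤ p.1}).indicator (fun _ => (1:ℝ≥0∞)) (t, a) ∂μ ∂volume := by
        apply lintegral_congr; intro t
        have : (fun a => ({p : ℝ × ℝ | p.2 ≤ p.1}).indicator (fun _ => (1:ℝ≥0∞)) (t, a))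
            = (Iic t).indicator (fun _ => (1:ℝ≥0∞)) := by
          funext a; simp [Set.indicator_apply, Set.mem_Iic]
        rw [this]; exact (lintegral_indicator_one measurableSet_Iic).symm
    _ = ∫⁻ a, ∫⁻ t in Iio (0:ℝ), ({p : ℝ × ℝ | p.2 ≤ p.1}).indicator (fun _ => (1:ℝ≥0∞)) (t, a) ∂volume ∂μ :=
        lintegral_lintegral_swap hmeas.aemeasurable
    _ = ∫⁻ a, ENNReal.ofReal (-a) ∂μ := by
        apply lintegral_congr; intro a
        have : (fun t => ({p : ℝ × ℝ | p.2 ≤ p.1}).indicator (fun _ => (1:ℝ≥0∞)) (t, a))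
            = (Ici a).indicator (fun _ => (1:ℝ≥0∞)) := by
          funext t; simp [Set.indicator_apply, Set.mem_Ici]
        rw [this]
        rw [show ((Ici a).indicator fun _ => (1:ℝ≥0∞)) = (Ici a).indicator 1 from rfl]
        rw [lintegral_indicator_one measurableSet_Ici, Measure.restrict_apply measurableSet_Ici]
        have : Ici a ∩ Iio (0:ℝ) = Ico a 0 := rfl
        rw [this, Real.volume_Ico, zero_sub]

lemma ks_tails_integrable (μ : Measure ℝ) [IsProbabilityMeasure μ]
    (hmom : Integrable (fun x => x) μ) :
    Integrable (fun t => if t < 0 then (μ (Iic t)).toReal else (μ (Ioi t)).toReal) volume := by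
  have hFmono : Monotone (fun t => (μ (Iic t)).toReal) := fun s u hsu =>
    ENNReal.toReal_mono (measure_ne_top μ _) (measure_mono (Iic_subset_Iic.2 hsu))
  have hGanti : Antitone (fun t => (μ (Ioi t)).toReal) := fun s u hsu =>
    ENNReal.toReal_mono (measure_ne_top μ _) (measure_mono (Ioi_subset_Ioi hsu))
  have hmeas : Measurable (fun t => if t < 0 then (μ (Iic t)).toReal else (μ (Ioi t)).toReal) :=
    Measurable.ite measurableSet_Iio hFmono.measurable hGanti.measurable
  refine ⟨hmeas.aestronglyMeasurable, ?_⟩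
  have hnorm : ∀ a : ℝ, (‖a‖₊ : ℝ≥0∞) = ENNReal.ofReal |a| := fun a => by
    rw [← Real.norm_eq_abs, ofReal_norm, enorm_eq_nnnorm]
  have key : ∀ t : ℝ, (‖if t < 0 then (μ (Iic t)).toReal else (μ (Ioi t)).toReal‖₊ : ℝ≥0∞)
      = if t < 0 then μ (Iic t) else μ (Ioi t) := by
    intro t
    rw [hnorm, abs_of_nonneg (by positivity)]
    split <;> exact ENNReal.ofReal_toReal (measure_ne_top μ _)
  rw [HasFiniteIntegral]
  calc ∫⁻ t, (‖if t < 0 then (μ (Iic t)).toReal else (μ (Ioi t)).toReal‖₊ : ℝ≥0∞) ∂volume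
      = ∫⁻ t, (if t < 0 then μ (Iic t) else μ (Ioi t)) ∂volume := lintegral_congr key
    _ = (∫⁻ t in Iio (0:ℝ), (if t < 0 then μ (Iic t) else μ (Ioi t)) ∂volume)
        + ∫⁻ t in Ici (0:ℝ), (if t < 0 then μ (Iic t) else μ (Ioi t)) ∂volume := by
        rw [show Ici (0:ℝ) = (Iio 0)ᶜ from (compl_Iio).symm]
        exact (lintegral_add_compl _ measurableSet_Iio).symm
    _ = (∫⁻ t in Iio (0:ℝ), μ (Iic t) ∂volume) + ∫⁻ t in Ici (0:ℝ), μ (Ioi t) ∂volume := by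
        congr 1
        · exact setLIntegral_congr_fun measurableSet_Iio (fun t ht => if_pos ht)
        · exact setLIntegral_congr_fun measurableSet_Ici
            (fun t ht => if_neg (not_lt.2 ht))
    _ = (∫⁻ a, ENNReal.ofReal (-a) ∂μ) + ∫⁻ a, ENNReal.ofReal a ∂μ := by
        rw [ks_tail1, ks_tail2]
    _ ≤ (∫⁻ a, (‖a‖₊ : ℝ≥0∞) ∂μ) + ∫⁻ a, (‖a‖₊ : ℝ≥0∞) ∂μ := by
        gcongr with a a
        · rw [hnorm]; exact ENNReal.ofReal_le_ofReal (neg_le_abs a)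
        · rw [hnorm]; exact ENNReal.ofReal_le_ofReal (le_abs_self a)
    _ < ⊤ := by
        have := hmom.hasFiniteIntegral
        rw [HasFiniteIntegral] at this
        exact ENNReal.add_lt_top.2 ⟨this, this⟩

end KSaux

/-- If `μ` has a Lebesgue density bounded by `C_μ`, then the Kolmogorov–Smirnov
distance between `μ` and `ν` is bounded by `2 √(C_μ W₁(μ,ν))`, where
`W₁(μ,ν) = ∫ |F_μ - F_ν|` is the Wasserstein-1 distance on the real line. -/
theorem ks_le_sqrt_wasserstein1
    (μ ν : Measure ℝ) [IsProbabilityMeasure μ] [IsProbabilityMeasure ν]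
    (hμ_mom : Integrable (fun x => x) μ) (hν_mom : Integrable (fun x => x) ν)
    (Cμ : ℝ) (fμ : ℝ → ℝ)
    (hf_nonneg : ∀ x, 0 ≤ fμ x) (hf_bdd : ∀ x, fμ x ≤ Cμ)
    (hdens : μ = volume.withDensity (fun x => ENNReal.ofReal (fμ x))) :
    let Fμ : ℝ → ℝ := fun t => (μ (Set.Iic t)).toReal
    let Fν : ℝ → ℝ := fun t => (ν (Set.Iic t)).toReal
    ∀ t : ℝ, |Fμ t - Fν t| ≤
      2 * Real.sqrt (Cμ * ∫ x, |Fμ x - Fν x| ∂volume) := by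
  intro Fμ Fν t
  -- Cμ is positive
  have hC : 0 < Cμ := by
    by_contra h
    push_neg at h
    have huniv : μ Set.univ = 0 := by
      rw [hdens, withDensity_apply _ MeasurableSet.univ]
      have h0 : ∀ x, ENNReal.ofReal (fμ x) = 0 := fun x =>
        ENNReal.ofReal_eq_zero.2 ((hf_bdd x).trans h)
      simp [h0]
    simp [measure_univ] at huniv
  -- basic facts about the CDFs
  have hFμmono : Monotone Fμ := fun s u hsu =>
    ENNReal.toReal_mono (measure_ne_top μ _) (measure_mono (Iic_subset_Iic.2 hsu))
  have hFνmono : Monotone Fν := fun s u hsu =>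
    ENNReal.toReal_mono (measure_ne_top ν _) (measure_mono (Iic_subset_Iic.2 hsu))
  have hFμ0 : ∀ s, 0 ≤ Fμ s := fun s => ENNReal.toReal_nonneg
  have hFν0 : ∀ s, 0 ≤ Fν s := fun s => ENNReal.toReal_nonneg
  have hsum : ∀ (ρ : Measure ℝ) (_ : IsProbabilityMeasure ρ) (s : ℝ),
      (ρ (Iic s)).toReal + (ρ (Ioi s)).toReal = 1 := by
    intro ρ hρ s
    rw [← ENNReal.toReal_add (measure_ne_top ρ _) (measure_ne_top ρ _),
      ← measure_union (Iic_disjoint_Ioi le_rfl) measurableSet_Ioi, Iic_union_Ioi,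
      measure_univ, ENNReal.toReal_one]
  -- Lipschitz property of Fμ
  have hLip : ∀ ⦃s u : ℝ⦄, s ≤ u → Fμ u - Fμ s ≤ Cμ * (u - s) := by
    intro s u hsu
    have hsplit : μ (Set.Iic u) = μ (Set.Iic s) + μ (Set.Ioc s u) := by
      rw [← measure_union (Iic_disjoint_Ioc le_rfl) measurableSet_Ioc,
        Set.Iic_union_Ioc_eq_Iic hsu]
    have hdiff : Fμ u - Fμ s = (μ (Set.Ioc s u)).toReal := by
      show (μ (Set.Iic u)).toReal - (μ (Set.Iic s)).toReal = _
      rw [hsplit, ENNReal.toReal_add (measure_ne_top μ _) (measure_ne_top μ _)]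
      ring
    rw [hdiff]
    have hbound : μ (Set.Ioc s u) ≤ ENNReal.ofReal (Cμ * (u - s)) := by
      rw [hdens, withDensity_apply _ measurableSet_Ioc]
      calc ∫⁻ x in Set.Ioc s u, ENNReal.ofReal (fμ x) ∂volume
          ≤ ∫⁻ _ in Set.Ioc s u, ENNReal.ofReal Cμ ∂volume :=
            lintegral_mono fun x => ENNReal.ofReal_le_ofReal (hf_bdd x)
        _ = ENNReal.ofReal Cμ * volume (Set.Ioc s u) := setLIntegral_const _ _
        _ = ENNReal.ofReal (Cμ * (u - s)) := by
            rw [Real.volume_Ioc, ← ENNReal.ofReal_mul hC.le]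
    exact ENNReal.toReal_le_of_le_ofReal (mul_nonneg hC.le (by linarith)) hbound
  -- integrability of |Fμ - Fν|
  have hint : Integrable (fun x => |Fμ x - Fν x|) volume := by
    apply Integrable.mono'
      (g := fun s => (if s < 0 then (μ (Iic s)).toReal else (μ (Ioi s)).toReal)
        + (if s < 0 then (ν (Iic s)).toReal else (ν (Ioi s)).toReal))
      ((ks_tails_integrable μ hμ_mom).add (ks_tails_integrable ν hν_mom))
      ((hFμmono.measurable.sub hFνmono.measurable).abs.aestronglyMeasurable)
    refine ae_of_all _ fun s => ?_
    rw [Real.norm_eq_abs, abs_abs]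
    by_cases hs : s < 0
    · simp only [if_pos hs]
      exact abs_sub _ _ |>.trans (by rw [abs_of_nonneg (hFμ0 s), abs_of_nonneg (hFν0 s)])
    · simp only [if_neg hs]
      have h1 := hsum μ inferInstance s
      have h2 := hsum ν inferInstance s
      have g1 : (0:ℝ) ≤ (μ (Ioi s)).toReal := ENNReal.toReal_nonneg
      have g2 : (0:ℝ) ≤ (ν (Ioi s)).toReal := ENNReal.toReal_nonneg
      have : Fμ s - Fν s = (ν (Ioi s)).toReal - (μ (Ioi s)).toReal := by
        show (μ (Iic s)).toReal - (ν (Iic s)).toReal = _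
        linarith
      rw [Pi.sub_apply, this]
      exact abs_le.2 ⟨by linarith, by linarith⟩
  have hW0 : 0 ≤ ∫ x, |Fμ x - Fν x| ∂volume := integral_nonneg fun x => abs_nonneg _
  set W := ∫ x, |Fμ x - Fν x| ∂volume with hW
  -- key quadratic bound
  have hkey : |Fμ t - Fν t|^2 / (2 * Cμ) ≤ W := by
    rcases le_total (Fν t) (Fμ t) with hle | hle
    · set δ := Fμ t - Fν t with hδdef
      have hδ : 0 ≤ δ := by simp [hδdef]; linarith
      have habs : |Fμ t - Fν t| = δ := abs_of_nonneg hδ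
      rw [habs, ← ks_wedgeL Cμ δ t hC hδ]
      have hmono : ∀ s ∈ Set.Ioc (t - δ/Cμ) t, δ - Cμ * (t - s) ≤ |Fμ s - Fν s| := by
        intro s hs
        have h1 : Fμ t - Fμ s ≤ Cμ * (t - s) := hLip hs.2
        have h2 : Fν s ≤ Fν t := hFνmono hs.2
        have : δ - Cμ * (t - s) ≤ Fμ s - Fν s := by
          simp only [hδdef]; linarith
        exact this.trans (le_abs_self _)
      have hlin : IntegrableOn (fun s => δ - Cμ * (t - s)) (Set.Ioc (t - δ/Cμ) t) volume := by
        apply Continuous.integrableOn_Ioc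
        continuity
      exact (setIntegral_mono_on hlin hint.integrableOn measurableSet_Ioc hmono).trans
        (setIntegral_le_integral hint (ae_of_all _ fun s => abs_nonneg _))
    · set δ := Fν t - Fμ t with hδdef
      have hδ : 0 ≤ δ := by simp [hδdef]; linarith
      have habs : |Fμ t - Fν t| = δ := by rw [abs_sub_comm]; exact abs_of_nonneg hδ
      rw [habs, ← ks_wedgeR Cμ δ t hC hδ]
      have hmono : ∀ s ∈ Set.Ioc t (t + δ/Cμ), δ - Cμ * (s - t) ≤ |Fμ s - Fν s| := by
        intro s hs
        have h1 : Fμ s - Fμ t ≤ Cμ * (s - t) := hLip hs.1.le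
        have h2 : Fν t ≤ Fν s := hFνmono hs.1.le
        have : δ - Cμ * (s - t) ≤ Fν s - Fμ s := by
          simp only [hδdef]; linarith
        calc δ - Cμ * (s - t) ≤ Fν s - Fμ s := this
          _ ≤ |Fν s - Fμ s| := le_abs_self _
          _ = |Fμ s - Fν s| := abs_sub_comm _ _
      have hlin : IntegrableOn (fun s => δ - Cμ * (s - t)) (Set.Ioc t (t + δ/Cμ)) volume := by
        apply Continuous.integrableOn_Ioc
        continuity
      exact (setIntegral_mono_on hlin hint.integrableOn measurableSet_Ioc hmono).trans
        (setIntegral_le_integral hint (ae_of_all _ fun s => abs_nonneg _))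
  -- conclude
  have h4 : |Fμ t - Fν t|^2 ≤ 4 * (Cμ * W) := by
    have := (div_le_iff₀ (by positivity)).1 hkey
    nlinarith
  have hsqrt4 : Real.sqrt 4 = 2 := by
    rw [show (4:ℝ) = 2^2 by norm_num, Real.sqrt_sq (by norm_num)]
  calc |Fμ t - Fν t| = Real.sqrt (|Fμ t - Fν t|^2) := (Real.sqrt_sq (abs_nonneg _)).symm
    _ ≤ Real.sqrt (4 * (Cμ * W)) := Real.sqrt_le_sqrt h4
    _ = 2 * Real.sqrt (Cμ * W) := by rw [Real.sqrt_mul (by norm_num), hsqrt4]
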